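/- Let a, b ∈ H_n. There exists a constant K ∈ ℕ, depending only on a and b, with the following property: for every x ∈ H_n with x^{-1} a x = b, all i, j ∈ {1,…,n} with t_i(a) ≠ 0 and t_j(a) ≠ 0, all integers l_i, l_j with t_i(x) = l_i·|t_i(a)| and t_j(x) = l_j·|t_j(a)|, and all r, s such that X_{i,r}(a) ∪ X_{j,s}(a) is almost equal to some infinite orbit of a, one has | |l_i| − |l_j| | ≤ K. -/

import Mathlib

namespace HoughtonPaper

/-- The set `X_n = {1,…,n} × ℕ` (rays indexed by `Fin n`). -/
abbrev X (n : ℕ) := Fin n × ℕ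

/-- `g` acts as the translation by `t i` on the ray `i` from the point `z` on. -/
def EvTransFrom {n : ℕ} (g : Equiv.Perm (X n)) (t : Fin n → ℤ) (z : ℕ) : Prop :=
  ∀ (i : Fin n) (m : ℕ), z ≤ m →
    (g (i, m)).1 = i ∧ ((g (i, m)).2 : ℤ) = (m : ℤ) + t i

/-- `g` is eventually a translation with translation vector `t`. -/
def EvTrans {n : ℕ} (g : Equiv.Perm (X n)) (t : Fin n → ℤ) : Prop :=
  ∃ z : ℕ, EvTransFrom g t z

/-- Membership in Houghton's group `H_n`. -/
def InH {n : ℕ} (g : Equiv.Perm (X n)) : Prop :=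
  ∃ t : Fin n → ℤ, EvTrans g t

/-- Support of a permutation. -/
def supp {α : Type*} (g : Equiv.Perm α) : Set α := {x | g x ≠ x}

/-- Membership in `FSym(X_n)`, the finitely supported permutations. -/
def InFSym {n : ℕ} (g : Equiv.Perm (X n)) : Prop := (supp g).Finite

/-- Two sets are almost equal if their symmetric difference is finite. -/
def AlmostEq {α : Type*} (A B : Set α) : Prop := (symmDiff A B).Finite

/-- The set `X_{i,r}(g) = {(i,m) : m ≡ r mod |t_i(g)|}`, for `t` the translation vector. -/
def Xir {n : ℕ} (i : Fin n) (t : Fin n → ℤ) (r : ℕ) : Set (X n) :=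
  {p : X n | p.1 = i ∧ p.2 % (t i).natAbs = r}

/-- Forward orbit `{(i,m)g^k : k ≥ 0}`. -/
def fwdOrbit {n : ℕ} (g : Equiv.Perm (X n)) (p : X n) : Set (X n) :=
  Set.range fun k : ℕ => (g ^ k) p

/-- The orbit `{x g^k : k ∈ ℤ}`. -/
def orbit {n : ℕ} (g : Equiv.Perm (X n)) (p : X n) : Set (X n) :=
  Set.range fun k : ℤ => (g ^ k) p

/-- `A` is an infinite orbit of `g`. -/
def IsInfOrbit {n : ℕ} (g : Equiv.Perm (X n)) (A : Set (X n)) : Prop :=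
  (∃ p : X n, A = orbit g p) ∧ A.Infinite

/-- The generating relation of `∼_g`: some infinite orbit of `g` is almost equal
to `X_{i,r}(g) ∪ X_{j,s}(g)`. -/
def BaseRel {n : ℕ} (g : Equiv.Perm (X n)) (t : Fin n → ℤ) (i j : Fin n) : Prop :=
  ∃ r s : ℕ, r < (t i).natAbs ∧ s < (t j).natAbs ∧
    ∃ A : Set (X n), IsInfOrbit g A ∧ AlmostEq A (Xir i t r ∪ Xir j t s)

/-- The equivalence relation `∼_g` on the rays, generated by `BaseRel`. -/
def SimRel {n : ℕ} (g : Equiv.Perm (X n)) (t : Fin n → ℤ) : Fin n → Fin n → Prop :=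
  Relation.EqvGen (BaseRel g t)

def genFun {n : ℕ} [NeZero n] (i : Fin n) : X n → X n :=
  fun p =>
    if p.1 = 0 then ((0 : Fin n), p.2 + 1)
    else if p.1 = i then (if p.2 = 0 then ((0 : Fin n), 0) else (i, p.2 - 1))
    else p

def genInvFun {n : ℕ} [NeZero n] (i : Fin n) : X n → X n :=
  fun p =>
    if p.1 = 0 then (if p.2 = 0 then (i, 0) else ((0 : Fin n), p.2 - 1))
    else if p.1 = i then (i, p.2 + 1)
    else p

/-- The generator `g_i` of Houghton's group (ray `1` of the paper is ray `0` here). -/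
def gen {n : ℕ} [NeZero n] (i : Fin n) (hi : i ≠ 0) : Equiv.Perm (X n) where
  toFun := genFun i
  invFun := genInvFun i
  left_inv := by
    rintro ⟨j, m⟩
    by_cases hj : j = 0
    · subst hj
      simp [genFun, genInvFun]
    · by_cases hji : j = i
      · subst hji
        rcases Nat.eq_zero_or_pos m with hm | hm
        · subst hm; simp [genFun, genInvFun, hi]
        · simp [genFun, genInvFun, hi, hm.ne', Nat.sub_add_cancel hm]
      · simp [genFun, genInvFun, hj, hji]
  right_inv := by
    rintro ⟨j, m⟩
    by_cases hj : j = 0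
    · subst hj
      rcases Nat.eq_zero_or_pos m with hm | hm
      · subst hm; simp [genFun, genInvFun, hi]
      · simp [genFun, genInvFun, hm.ne', hi.symm, Nat.sub_add_cancel hm]
    · by_cases hji : j = i
      · subst hji
        simp [genFun, genInvFun, hj]
      · simp [genFun, genInvFun, hj, hji]

/-- The transposition `τ` exchanging `(1,0)` and `(2,0)` (here `(0,0)` and `(1,0)`). -/
def tau (n : ℕ) [NeZero n] : Equiv.Perm (X n) :=
  Equiv.swap ((0 : Fin n), 0) ((1 : Fin n), 0)

/-- Letters of the alphabet `{g_2,…,g_n}^{±1}`. -/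
abbrev Letter (n : ℕ) [NeZero n] := {i : Fin n // i ≠ 0} × Bool

/-- Words over `{g_2,…,g_n}^{±1}`. -/
abbrev Word (n : ℕ) [NeZero n] := List (Letter n)

def evalLetter {n : ℕ} [NeZero n] (l : Letter n) : Equiv.Perm (X n) :=
  if l.2 then gen l.1.1 l.1.2 else (gen l.1.1 l.1.2)⁻¹

/-- The element of `Sym(X_n)` represented by a word. -/
def wordProd {n : ℕ} [NeZero n] (w : Word n) : Equiv.Perm (X n) :=
  (w.map evalLetter).prod

/-- maximal natAbs of the vector -/
def vecBound {n : ℕ} (t : Fin n → ℤ) : ℕ := Finset.univ.sup fun i => (t i).natAbs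

lemma vecBound_le {n : ℕ} (t : Fin n → ℤ) (i : Fin n) : (t i).natAbs ≤ vecBound t :=
  Finset.le_sup (f := fun i => (t i).natAbs) (Finset.mem_univ i)

lemma abs_le_vecBound {n : ℕ} (t : Fin n → ℤ) (i : Fin n) : |t i| ≤ (vecBound t : ℤ) := by
  rw [Int.abs_eq_natAbs]
  exact_mod_cast vecBound_le t i

lemma EvTransFrom.apply_eq {n : ℕ} {g : Equiv.Perm (X n)} {t : Fin n → ℤ} {z : ℕ}
    (h : EvTransFrom g t z) (i : Fin n) (m : ℕ) (hm : z ≤ m) :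
    g (i, m) = (i, ((m : ℤ) + t i).toNat) := by
  obtain ⟨h1, h2⟩ := h i m hm
  have h3 : ((m : ℤ) + t i).toNat = (g (i, m)).2 := by
    rw [← h2]; exact Int.toNat_natCast _
  exact Prod.ext h1 h3.symm

lemma evt_mul {n : ℕ} {g h : Equiv.Perm (X n)} {s t : Fin n → ℤ}
    (hg : EvTrans g s) (hh : EvTrans h t) :
    EvTrans (g * h) (fun i => s i + t i) := by
  obtain ⟨zg, hzg⟩ := hg
  obtain ⟨zh, hzh⟩ := hh
  refine ⟨max zh (zg + vecBound t), fun i m hm => ?_⟩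
  have hm1 : zh ≤ m := le_trans (le_max_left _ _) hm
  obtain ⟨h1, h2⟩ := hzh i m hm1
  set q := h (i, m) with hq
  have hq' : q = (i, q.2) := Prod.ext h1 rfl
  have hq2 : zg ≤ q.2 := by
    have : (zg : ℤ) + vecBound t ≤ (m : ℤ) := by
      exact_mod_cast le_trans (le_max_right _ _) hm
    have habs := abs_le.mp (abs_le_vecBound t i)
    have : (zg : ℤ) ≤ (q.2 : ℤ) := by rw [h2]; omega
    exact_mod_cast this
  have := hzg i q.2 hq2
  constructor
  · show (g (h (i, m))).1 = i
    rw [← hq, hq']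
    exact this.1
  · show ((g (h (i, m))).2 : ℤ) = (m : ℤ) + (s i + t i)
    rw [← hq, hq']
    rw [this.2, h2]; ring

lemma evt_one {n : ℕ} : EvTrans (1 : Equiv.Perm (X n)) (fun _ => 0) :=
  ⟨0, fun i m _ => by simp⟩

lemma evt_inv {n : ℕ} {g : Equiv.Perm (X n)} {t : Fin n → ℤ}
    (hg : EvTrans g t) : EvTrans g⁻¹ (fun i => -t i) := by
  obtain ⟨zg, hzg⟩ := hg
  refine ⟨zg + vecBound t, fun i m hm => ?_⟩
  have habs : t i ≤ (vecBound t : ℤ) := le_of_abs_le (abs_le_vecBound t i)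
  have hnonneg : (0 : ℤ) ≤ (m : ℤ) - t i := by
    have : (zg : ℤ) + vecBound t ≤ (m : ℤ) := by exact_mod_cast hm
    linarith
  set m2 := ((m : ℤ) - t i).toNat with hm2
  have hm2cast : (m2 : ℤ) = (m : ℤ) - t i := Int.toNat_of_nonneg hnonneg
  have hm2ge : zg ≤ m2 := by
    have : (zg : ℤ) ≤ (m2 : ℤ) := by
      rw [hm2cast]
      have : (zg : ℤ) + vecBound t ≤ (m : ℤ) := by exact_mod_cast hm
      linarith
    exact_mod_cast this
  have happ := hzg.apply_eq i m2 hm2ge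
  have heq : ((m2 : ℤ) + t i).toNat = m := by
    have h5 : ((m2 : ℤ) + t i) = (m : ℤ) := by rw [hm2cast]; ring
    rw [h5]; exact Int.toNat_natCast m
  rw [heq] at happ
  have key : g⁻¹ (i, m) = (i, m2) := by
    rw [← happ]; exact Equiv.symm_apply_apply g _
  rw [key]
  exact ⟨rfl, by rw [hm2cast]; push_cast; ring⟩

lemma evt_pow {n : ℕ} {g : Equiv.Perm (X n)} {t : Fin n → ℤ}
    (hg : EvTrans g t) (k : ℕ) : EvTrans (g ^ k) (fun i => (k : ℤ) * t i) := by
  induction k with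
  | zero => simpa using evt_one
  | succ k ih =>
      have := evt_mul ih hg
      rw [← pow_succ] at this
      convert this using 2 with i
      push_cast; ring

lemma evt_zpow {n : ℕ} {g : Equiv.Perm (X n)} {t : Fin n → ℤ}
    (hg : EvTrans g t) (k : ℤ) : EvTrans (g ^ k) (fun i => k * t i) := by
  rcases k with k | k
  · rw [Int.ofNat_eq_coe, zpow_natCast]
    exact evt_pow hg k
  · rw [zpow_negSucc]
    have := evt_inv (evt_pow hg (k + 1))
    convert this using 2 with i
    rw [Int.negSucc_eq]; push_cast; ring


lemma AlmostEq.symm {α : Type*} {A B : Set α} (h : AlmostEq A B) : AlmostEq B A := by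
  unfold AlmostEq at *; rwa [symmDiff_comm]

lemma AlmostEq.trans {α : Type*} {A B C : Set α} (h1 : AlmostEq A B) (h2 : AlmostEq B C) :
    AlmostEq A C := by
  unfold AlmostEq at *
  exact Set.Finite.subset (h1.union h2) (symmDiff_triangle A B C)

lemma AlmostEq.union {α : Type*} {A B C D : Set α} (h1 : AlmostEq A C) (h2 : AlmostEq B D) :
    AlmostEq (A ∪ B) (C ∪ D) := by
  unfold AlmostEq at *
  refine Set.Finite.subset (h1.union h2) ?_
  intro x hx
  simp only [Set.mem_symmDiff, Set.mem_union] at *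
  tauto

lemma AlmostEq.image {α : Type*} {A B : Set α} (c : Equiv.Perm α) (h : AlmostEq A B) :
    AlmostEq (c '' A) (c '' B) := by
  unfold AlmostEq at *
  rw [← Set.image_symmDiff c.injective A B]
  exact h.image c

/-- key finite window lemma -/
lemma almostEq_image_of_window {α : Type*} (c : Equiv.Perm α) (T W : Set α) (hW : W.Finite)
    (h1 : ∀ p ∈ T, p ∉ W → c p ∈ T) (h2 : ∀ p ∈ T, p ∉ W → c⁻¹ p ∈ T) :
    AlmostEq (c '' T) T := by
  refine Set.Finite.subset ((hW.image c).union hW) ?_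
  intro q hq
  rw [Set.mem_symmDiff] at hq
  rcases hq with ⟨⟨p, hp, rfl⟩, hq2⟩ | ⟨hq1, hq2⟩
  · left
    by_contra hpw
    have : p ∉ W := fun h => hpw ⟨p, h, rfl⟩
    exact hq2 (h1 p hp this)
  · right
    by_contra hqw
    refine hq2 ⟨c⁻¹ q, h2 q hq1 hqw, ?_⟩
    simp
  -- membership: c (c⁻¹ q) = q

/- orbit lemmas -/
lemma zpow_apply_zpow {n : ℕ} (g : Equiv.Perm (X n)) (k l : ℤ) (p : X n) :
    (g ^ k) ((g ^ l) p) = (g ^ (k + l)) p := by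
  rw [zpow_add]; rfl

lemma mem_orbit_self {n : ℕ} (g : Equiv.Perm (X n)) (p : X n) : p ∈ orbit g p :=
  ⟨0, by simp⟩

lemma orbit_eq_of_mem {n : ℕ} {g : Equiv.Perm (X n)} {p q : X n} (h : q ∈ orbit g p) :
    orbit g q = orbit g p := by
  obtain ⟨k, rfl⟩ := h
  ext y
  simp only [orbit, Set.mem_range]
  constructor
  · rintro ⟨l, rfl⟩; exact ⟨l + k, (zpow_apply_zpow g l k p).symm⟩
  · rintro ⟨l, rfl⟩
    refine ⟨l - k, ?_⟩
    rw [zpow_apply_zpow, sub_add_cancel]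

lemma image_orbit_of_commute {n : ℕ} {g c : Equiv.Perm (X n)} (h : g * c = c * g) (p : X n) :
    c '' orbit g p = orbit g (c p) := by
  have hc : ∀ k : ℤ, c ((g ^ k) p) = (g ^ k) (c p) := by
    intro k
    have h2 : Commute c g := h.symm
    have h3 : (c * g ^ k) p = (g ^ k * c) p := by rw [(h2.zpow_right k).eq]
    simpa using h3
  ext y
  simp only [orbit, Set.mem_image, Set.mem_range]
  constructor
  · rintro ⟨q, ⟨k, rfl⟩, rfl⟩; exact ⟨k, (hc k).symm⟩
  · rintro ⟨k, rfl⟩; exact ⟨(g ^ k) p, ⟨k, rfl⟩, hc k⟩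

lemma orbit_eq_of_almostEq {n : ℕ} {g : Equiv.Perm (X n)} {p q : X n}
    (hinf : (orbit g p).Infinite) (h : AlmostEq (orbit g q) (orbit g p)) :
    orbit g q = orbit g p := by
  by_cases hdisj : ∃ z, z ∈ orbit g q ∩ orbit g p
  · obtain ⟨z, hz1, hz2⟩ := hdisj
    rw [← orbit_eq_of_mem hz1, orbit_eq_of_mem hz2]
  · push_neg at hdisj
    exfalso
    apply hinf
    refine Set.Finite.subset h ?_
    intro y hy
    rw [Set.mem_symmDiff]
    right
    exact ⟨hy, fun hc => hdisj y ⟨hc, hy⟩⟩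

/-- finite low window -/
lemma finite_low {n : ℕ} (z : ℕ) : ({p : X n | p.2 < z}).Finite := by
  have : ({p : X n | p.2 < z}) ⊆ (Set.univ : Set (Fin n)) ×ˢ (Set.Iio z) := by
    intro p hp; exact ⟨trivial, hp⟩
  exact Set.Finite.subset (Set.finite_univ.prod (Set.finite_Iio z)) this

lemma almostEq_image_Xir {n : ℕ} {c : Equiv.Perm (X n)} {tc ta : Fin n → ℤ}
    (hc : EvTrans c tc) (i : Fin n) (r : ℕ)
    (hd : ∃ d : ℤ, tc i = d * ((ta i).natAbs : ℤ)) :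
    AlmostEq (c '' Xir i ta r) (Xir i ta r) := by
  obtain ⟨d, hdi⟩ := hd
  obtain ⟨z1, hz1⟩ := hc
  obtain ⟨z2, hz2⟩ := evt_inv ⟨z1, hz1⟩
  set N : ℕ := (ta i).natAbs
  have key : ∀ (m m2 : ℕ) (e : ℤ), (m2 : ℤ) = (m : ℤ) + e * (N : ℤ) → m % N = r → m2 % N = r := by
    intro m m2 e he hm
    have : ((m2 % N : ℕ) : ℤ) = ((m % N : ℕ) : ℤ) := by
      rw [Int.natCast_mod, Int.natCast_mod, he, Int.add_mul_emod_self_right]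
    rw [hm] at this
    exact_mod_cast this
  refine almostEq_image_of_window c _ {p : X n | p.2 < max z1 z2} (finite_low _) ?_ ?_
  · rintro ⟨i', m⟩ ⟨hp1, hp2⟩ hw
    simp only [Set.mem_setOf_eq, not_lt] at hw
    cases hp1
    obtain ⟨h1, h2⟩ := hz1 i' m (le_trans (le_max_left _ _) hw)
    refine ⟨h1, ?_⟩
    exact key m (c (i', m)).2 d (by rw [h2, hdi]) hp2
  · rintro ⟨i', m⟩ ⟨hp1, hp2⟩ hw
    simp only [Set.mem_setOf_eq, not_lt] at hw
    cases hp1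
    obtain ⟨h1, h2⟩ := hz2 i' m (le_trans (le_max_right _ _) hw)
    refine ⟨h1, ?_⟩
    refine key m (c⁻¹ (i', m)).2 (-d) ?_ hp2
    rw [h2]; simp only [hdi]; ring

/-- Points of A on ray i with arbitrarily large height. -/
lemma unbounded_heights {n : ℕ} {A : Set (X n)} {ta : Fin n → ℤ} {i : Fin n} {r : ℕ}
    (hr : r < (ta i).natAbs) (hXA : (Xir i ta r \ A).Finite) :
    ∀ M : ℕ, ∃ m : ℕ, M ≤ m ∧ (i, m) ∈ A := by
  intro M
  set N : ℕ := (ta i).natAbs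
  have hN : 0 < N := Nat.pos_of_ne_zero (by omega)
  set f : ℕ → X n := fun k => (i, r + N * k) with hf
  have hfX : ∀ k, f k ∈ Xir i ta r := by
    intro k
    refine ⟨rfl, ?_⟩
    show (r + N * k) % N = r
    rw [Nat.add_mul_mod_self_left]
    exact Nat.mod_eq_of_lt hr
  have hinj : Function.Injective f := by
    intro k1 k2 h
    have := congrArg Prod.snd h
    simp only [f] at this
    exact Nat.eq_of_mul_eq_mul_left hN (by omega)
  have hbad : {k : ℕ | f k ∉ A}.Finite := by
    refine Set.Finite.of_finite_image ?_ (hinj.injOn)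
    refine Set.Finite.subset hXA ?_
    rintro p ⟨k, hk, rfl⟩
    exact ⟨hfX k, hk⟩
  have hgood : {k : ℕ | f k ∈ A}.Infinite := by
    have : {k : ℕ | f k ∈ A} = ({k : ℕ | f k ∉ A})ᶜ := by
      ext k; simp
    rw [this]
    exact hbad.infinite_compl
  obtain ⟨k, hk, hkM⟩ := hgood.exists_gt M
  exact ⟨r + N * k, by nlinarith, hk⟩


lemma commute_zpow_apply {n : ℕ} {a c : Equiv.Perm (X n)} (h : a * c = c * a) (k : ℤ)
    (q : X n) : c ((a ^ k) q) = (a ^ k) (c q) := by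
  have h2 : Commute c a := h.symm
  have h3 : (c * a ^ k) q = (a ^ k * c) q := by rw [(h2.zpow_right k).eq]
  simpa using h3

lemma central_k0 {n : ℕ} {a c : Equiv.Perm (X n)} {ta tc : Fin n → ℤ}
    (ha : EvTrans a ta) (hc : EvTrans c tc) (hcomm : a * c = c * a)
    {A : Set (X n)} {p : X n} (hA : A = orbit a p) (hcA : c '' A = A) :
    ∃ k0 : ℤ, ∀ i : Fin n, (∀ M : ℕ, ∃ m, M ≤ m ∧ (i, m) ∈ A) → tc i = k0 * ta i := by
  subst hA
  have hcp : c p ∈ orbit a p := by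
    rw [← hcA]; exact ⟨p, mem_orbit_self a p, rfl⟩
  obtain ⟨k0, hk0'⟩ := hcp
  have hk0 : (a ^ k0) p = c p := hk0'
  refine ⟨k0, ?_⟩
  intro i hub
  have hall : ∀ q ∈ orbit a p, c q = (a ^ k0) q := by
    rintro q ⟨l, rfl⟩
    calc c ((a ^ l) p) = (a ^ l) (c p) := commute_zpow_apply hcomm l p
    _ = (a ^ l) ((a ^ k0) p) := by rw [hk0]
    _ = (a ^ (l + k0)) p := zpow_apply_zpow a l k0 p
    _ = (a ^ (k0 + l)) p := by rw [add_comm]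
    _ = (a ^ k0) ((a ^ l) p) := (zpow_apply_zpow a k0 l p).symm
  obtain ⟨Z1, hZ1⟩ := evt_zpow ha k0
  obtain ⟨Z2, hZ2⟩ := hc
  obtain ⟨m, hm, hmA⟩ := hub (max Z1 Z2)
  have h1 := (hZ1 i m (le_trans (le_max_left _ _) hm)).2
  have h2 := (hZ2 i m (le_trans (le_max_right _ _) hm)).2
  have h3 : ((c (i, m)).2 : ℤ) = (((a ^ k0) (i, m)).2 : ℤ) := by rw [hall (i, m) hmA]
  rw [h1, h2] at h3
  exact add_left_cancel h3

lemma conj_rel {n : ℕ} {a b : Equiv.Perm (X n)} {ta : Fin n → ℤ} (ha : EvTrans a ta)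
    {x x' : Equiv.Perm (X n)} {tx tx' : Fin n → ℤ}
    (hx : EvTrans x tx) (hx' : EvTrans x' tx')
    (hcx : x⁻¹ * a * x = b) (hcx' : x'⁻¹ * a * x' = b)
    {i j : Fin n} (hti : ta i ≠ 0) (htj : ta j ≠ 0)
    {li lj li' lj' : ℤ}
    (hi : tx i = li * |ta i|) (hj : tx j = lj * |ta j|)
    (hi' : tx' i = li' * |ta i|) (hj' : tx' j = lj' * |ta j|)
    {r s : ℕ} (hr : r < (ta i).natAbs) (hs : s < (ta j).natAbs)
    {A : Set (X n)} (hA : IsInfOrbit a A) (hAeq : AlmostEq (Xir i ta r ∪ Xir j ta s) A) :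
    li - li' = lj - lj' ∨ li - li' = -(lj - lj') := by
  classical
  set c := x * x'⁻¹ with hcdef
  have hcomm : a * c = c * a := by
    calc a * c = x * (x⁻¹ * a * x) * x'⁻¹ := by rw [hcdef]; group
    _ = x * (x'⁻¹ * a * x') * x'⁻¹ := by rw [hcx, hcx']
    _ = c * a := by rw [hcdef]; group
  set tc : Fin n → ℤ := fun k => tx k + -tx' k with htcdef
  have hctrans : EvTrans c tc := evt_mul hx (evt_inv hx')
  have habsi : |ta i| = ((ta i).natAbs : ℤ) := Int.abs_eq_natAbs _
  have habsj : |ta j| = ((ta j).natAbs : ℤ) := Int.abs_eq_natAbs _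
  have htci : tc i = (li - li') * ((ta i).natAbs : ℤ) := by
    simp only [htcdef, hi, hi', habsi]; ring
  have htcj : tc j = (lj - lj') * ((ta j).natAbs : ℤ) := by
    simp only [htcdef, hj, hj', habsj]; ring
  obtain ⟨⟨p, hAp⟩, hAinf⟩ := hA
  -- c '' A = A
  have himg : c '' A = orbit a (c p) := by rw [hAp]; exact image_orbit_of_commute hcomm p
  have himgi : AlmostEq (c '' Xir i ta r) (Xir i ta r) :=
    almostEq_image_Xir hctrans i r ⟨li - li', htci⟩
  have himgj : AlmostEq (c '' Xir j ta s) (Xir j ta s) :=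
    almostEq_image_Xir hctrans j s ⟨lj - lj', htcj⟩
  have hchain : AlmostEq (c '' A) A := by
    have h1 : AlmostEq (c '' (Xir i ta r ∪ Xir j ta s)) (c '' A) := hAeq.image c
    have h2 : AlmostEq (c '' (Xir i ta r ∪ Xir j ta s)) (Xir i ta r ∪ Xir j ta s) := by
      rw [Set.image_union]; exact himgi.union himgj
    exact (h1.symm.trans h2).trans hAeq
  have hcA : c '' A = A := by
    rw [himg] at hchain ⊢
    rw [hAp] at hchain ⊢
    exact orbit_eq_of_almostEq (hAp ▸ hAinf) hchain
  obtain ⟨k0, hk0⟩ := central_k0 ha hctrans hcomm hAp hcA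
  have hsubi : (Xir i ta r \ A).Finite := by
    refine Set.Finite.subset hAeq ?_
    rintro q ⟨hq1, hq2⟩
    rw [Set.mem_symmDiff]
    exact Or.inl ⟨Or.inl hq1, hq2⟩
  have hsubj : (Xir j ta s \ A).Finite := by
    refine Set.Finite.subset hAeq ?_
    rintro q ⟨hq1, hq2⟩
    rw [Set.mem_symmDiff]
    exact Or.inl ⟨Or.inr hq1, hq2⟩
  have heqi : tc i = k0 * ta i := hk0 i (unbounded_heights hr hsubi)
  have heqj : tc j = k0 * ta j := hk0 j (unbounded_heights hs hsubj)
  rw [htci] at heqi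
  rw [htcj] at heqj
  rw [← habsi] at heqi
  rw [← habsj] at heqj
  -- now case on sign of ta i, ta j
  have hui : li - li' = k0 ∨ li - li' = -k0 := by
    rcases abs_choice (ta i) with h | h
    · left
      rw [h] at heqi
      exact mul_right_cancel₀ hti heqi
    · right
      rw [h] at heqi
      have : (-(li - li')) * ta i = k0 * ta i := by rw [← heqi]; ring
      have := mul_right_cancel₀ hti this
      linarith
  have huj : lj - lj' = k0 ∨ lj - lj' = -k0 := by
    rcases abs_choice (ta j) with h | h
    · left
      rw [h] at heqj
      exact mul_right_cancel₀ htj heqj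
    · right
      rw [h] at heqj
      have : (-(lj - lj')) * ta j = k0 * ta j := by rw [← heqj]; ring
      have := mul_right_cancel₀ htj this
      linarith
  omega


end HoughtonPaper

open HoughtonPaper

theorem statement10 (n : ℕ) (hn : 2 ≤ n) (a b : Equiv.Perm (X n)) (ta tb : Fin n → ℤ)
    (ha : EvTrans a ta) (hb : EvTrans b tb) :
    ∃ K : ℕ, ∀ (x : Equiv.Perm (X n)) (tx : Fin n → ℤ), EvTrans x tx →
      x⁻¹ * a * x = b →
      ∀ i j : Fin n, ta i ≠ 0 → ta j ≠ 0 →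
      ∀ li lj : ℤ, tx i = li * |ta i| → tx j = lj * |ta j| →
      ∀ r s : ℕ, r < (ta i).natAbs → s < (ta j).natAbs →
      (∃ A : Set (X n), IsInfOrbit a A ∧ AlmostEq (Xir i ta r ∪ Xir j ta s) A) →
      |(|li| - |lj|)| ≤ (K : ℤ) := by
  classical
  have hchoice : ∀ i j : Fin n, ∃ Kij : ℕ, ∀ (x : Equiv.Perm (X n)) (tx : Fin n → ℤ),
      EvTrans x tx → x⁻¹ * a * x = b → ta i ≠ 0 → ta j ≠ 0 →
      ∀ li lj : ℤ, tx i = li * |ta i| → tx j = lj * |ta j| →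
      ∀ r s : ℕ, r < (ta i).natAbs → s < (ta j).natAbs →
      (∃ A : Set (X n), IsInfOrbit a A ∧ AlmostEq (Xir i ta r ∪ Xir j ta s) A) →
      |(|li| - |lj|)| ≤ (Kij : ℤ) := by
    intro i j
    by_cases hPij : ∃ v : ℤ × ℤ, ∃ x : Equiv.Perm (X n), ∃ tx : Fin n → ℤ,
        EvTrans x tx ∧ x⁻¹ * a * x = b ∧ tx i = v.1 * |ta i| ∧ tx j = v.2 * |ta j|
    · obtain ⟨v, x', tx', hx', hcx', hvi, hvj⟩ := hPij
      refine ⟨(|v.1| + |v.2|).toNat, ?_⟩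
      rintro x tx hx hcx hti htj li lj hli hlj r s hr hs ⟨A, hA, hAeq⟩
      have hrel := conj_rel ha hx hx' hcx hcx' hti htj hli hlj hvi hvj hr hs hA hAeq
      have hcast : (((|v.1| + |v.2|).toNat : ℕ) : ℤ) = |v.1| + |v.2| :=
        Int.toNat_of_nonneg (by positivity)
      rw [hcast]
      rcases hrel with h | h
      · calc |(|li| - |lj|)| ≤ |li - lj| := abs_abs_sub_abs_le_abs_sub li lj
        _ = |v.1 - v.2| := by congr 1; linarith
        _ ≤ |v.1| + |v.2| := abs_sub v.1 v.2
      · have h2 : |(|li| - |lj|)| ≤ |li + lj| := by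
          have := abs_abs_sub_abs_le_abs_sub li (-lj)
          rwa [abs_neg, sub_neg_eq_add] at this
        calc |(|li| - |lj|)| ≤ |li + lj| := h2
        _ = |v.1 + v.2| := by congr 1; linarith
        _ ≤ |v.1| + |v.2| := abs_add_le v.1 v.2
    · refine ⟨0, ?_⟩
      intro x tx hx hcx hti htj li lj hli hlj r s hr hs hAe
      exact absurd ⟨(li, lj), x, tx, hx, hcx, hli, hlj⟩ hPij
  choose Kf hKf using hchoice
  refine ⟨Finset.univ.sup (fun ij : Fin n × Fin n => Kf ij.1 ij.2), ?_⟩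
  intro x tx hx hcx i j hti htj li lj hli hlj r s hr hs hAe
  refine le_trans (hKf i j x tx hx hcx hti htj li lj hli hlj r s hr hs hAe) ?_
  exact_mod_cast Finset.le_sup (f := fun ij : Fin n × Fin n => Kf ij.1 ij.2)
    (Finset.mem_univ (i, j))
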